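/- Let G be a finite abelian group with |G| ≥ 3. Then the set of distances Δ(G) of the monoid B(G) is an interval of positive integers with min Δ(G) = 1 and max Δ(G) ≤ D(G) − 2. -/

import Mathlib

open scoped Classical ENNReal

/-- An atom of a reduced additive monoid: a nonzero element which is not the sum of
two nonzero elements. -/
def IsAddAtom {N : Type*} [AddMonoid N] (u : N) : Prop :=
  u ≠ 0 ∧ ∀ v w : N, u = v + w → v = 0 ∨ w = 0

/-- The set of lengths of `a` in a reduced additive monoid. -/
def addLengths {N : Type*} [AddMonoid N] (a : N) : Set ℕ :=
  {k | ∃ l : List N, l.length = k ∧ (∀ x ∈ l, IsAddAtom x) ∧ l.sum = a}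

/-- An atom of the (reduced) submonoid `S`: a nonzero element of `S` which is not the
sum of two nonzero elements of `S`. -/
def IsAtomIn {N : Type*} [AddCommMonoid N] (S : Set N) (u : N) : Prop :=
  u ∈ S ∧ u ≠ 0 ∧ ∀ v ∈ S, ∀ w ∈ S, u = v + w → v = 0 ∨ w = 0

/-- The set of lengths of `a` relative to the submonoid `S`. -/
def lengthsIn {N : Type*} [AddCommMonoid N] (S : Set N) (a : N) : Set ℕ :=
  {k | ∃ l : List N, l.length = k ∧ (∀ x ∈ l, IsAtomIn S x) ∧ l.sum = a}

/-- The set of distances of a set `L ⊆ ℕ`. -/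
def distances (L : Set ℕ) : Set ℕ :=
  {d | 0 < d ∧ ∃ k ∈ L, k + d ∈ L ∧ ∀ m ∈ L, k ≤ m → m ≤ k + d → m = k ∨ m = k + d}

/-- The set of distances of the submonoid `S`. -/
def DeltaIn {N : Type*} [AddCommMonoid N] (S : Set N) : Set ℕ :=
  ⋃ a ∈ S, distances (lengthsIn S a)

/-- The monoid of zero-sum sequences over `G`, realized as the set of multisets
over `G` with sum zero. -/
def ZS (G : Type*) [AddCommGroup G] : Set (Multiset G) := {s | s.sum = 0}

/-- The Davenport constant: the maximal length of an atom of `B(G)`. -/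
noncomputable def davenport (G : Type*) [AddCommGroup G] : ℕ :=
  sSup {n : ℕ | ∃ s : Multiset G, IsAtomIn (ZS G) s ∧ Multiset.card s = n}

/-- The union `U_k` of sets of lengths relative to `S`. -/
def UIn {N : Type*} [AddCommMonoid N] (S : Set N) (k : ℕ) : Set ℕ :=
  {ℓ | ∃ l1 l2 : List N, l1.length = k ∧ l2.length = ℓ ∧
      (∀ x ∈ l1, IsAtomIn S x) ∧ (∀ x ∈ l2, IsAtomIn S x) ∧ l1.sum = l2.sum}

/-- `ρ_k = sup U_k`, valued in `ℝ≥0∞`. -/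
noncomputable def rhoKIn {N : Type*} [AddCommMonoid N] (S : Set N) (k : ℕ) : ℝ≥0∞ :=
  ⨆ ℓ ∈ UIn S k, (ℓ : ℝ≥0∞)

/-- The elasticity `ρ(L) = sup L / min L` of a set of lengths, with `ρ({0}) = 1`. -/
noncomputable def setElasticity (L : Set ℕ) : ℝ≥0∞ :=
  if L = {0} then 1 else (⨆ n ∈ L, (n : ℝ≥0∞)) / ((sInf L : ℕ) : ℝ≥0∞)

/-- The elasticity of the submonoid `S`. -/
noncomputable def elasticityIn {N : Type*} [AddCommMonoid N] (S : Set N) : ℝ≥0∞ :=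
  ⨆ a ∈ S, setElasticity (lengthsIn S a)

set_option linter.unusedSectionVars false

section ZSAux

variable {G : Type*} [AddCommGroup G]

/-! ### list helpers -/

lemma zs_list_sum_map_le {α : Type*} (l : List α) (f g : α → ℕ)
    (h : ∀ a ∈ l, f a ≤ g a) : (l.map f).sum ≤ (l.map g).sum := by
  induction l with
  | nil => simp
  | cons a t ih =>
    simp only [List.map_cons, List.sum_cons]
    exact Nat.add_le_add (h a (by simp)) (ih fun b hb => h b (by simp [hb]))

lemma zs_list_sum_map_eq {α : Type*} (l : List α) (f g : α → ℕ)
    (h : ∀ a ∈ l, f a = g a) : (l.map f).sum = (l.map g).sum := by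
  induction l with
  | nil => simp
  | cons a t ih =>
    simp only [List.map_cons, List.sum_cons]
    rw [h a (by simp), ih fun b hb => h b (by simp [hb])]

lemma zs_list_sum_map_add {α : Type*} (l : List α) (f g : α → ℕ) :
    (l.map fun a => f a + g a).sum = (l.map f).sum + (l.map g).sum := by
  induction l with
  | nil => simp
  | cons a t ih => simp only [List.map_cons, List.sum_cons, ih]; omega

lemma zs_list_sum_const {α : Type*} (l : List α) (c : ℕ) :
    (l.map fun _ => c).sum = c * l.length := by
  induction l with
  | nil => simp
  | cons a t ih => simp only [List.map_cons, List.sum_cons, List.length_cons, ih]; ring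

lemma zs_count_list_sum (a : G) (l : List (Multiset G)) :
    Multiset.count a l.sum = (l.map (Multiset.count a)).sum := by
  induction l with
  | nil => simp
  | cons s t ih => simp [Multiset.count_add, ih]

lemma zs_card_list_sum (l : List (Multiset G)) :
    Multiset.card l.sum = (l.map Multiset.card).sum := by
  induction l with
  | nil => simp
  | cons s t ih => simp [ih]

lemma zs_mem_le_list_sum {s : Multiset G} {l : List (Multiset G)} (h : s ∈ l) : s ≤ l.sum := by
  induction l with
  | nil => simp at h
  | cons a t ih =>
    rcases List.mem_cons.mp h with h | h
    · subst h; rw [List.sum_cons]; exact self_le_add_right _ _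
    · rw [List.sum_cons]; exact le_trans (ih h) (self_le_add_left _ _)

lemma zs_exists_mem_of_mem_list_sum {a : G} {l : List (Multiset G)} (h : a ∈ l.sum) :
    ∃ s ∈ l, a ∈ s := by
  induction l with
  | nil => simp at h
  | cons s t ih =>
    rw [List.sum_cons, Multiset.mem_add] at h
    rcases h with h | h
    · exact ⟨s, by simp, h⟩
    · obtain ⟨w, hw, hw2⟩ := ih h; exact ⟨w, by simp [hw], hw2⟩

lemma zs_list_sum_sum {l : List (Multiset G)} (h : ∀ x ∈ l, Multiset.sum x = 0) :
    (l.sum).sum = 0 := by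
  induction l with
  | nil => simp
  | cons s t ih =>
    rw [List.sum_cons, Multiset.sum_add, h s (by simp), zero_add]
    exact ih fun x hx => h x (by simp [hx])

/-! ### atoms -/

lemma IsAtomIn.zsum {u : Multiset G} (h : IsAtomIn (ZS G) u) : u.sum = 0 := h.1

lemma IsAtomIn.nz {u : Multiset G} (h : IsAtomIn (ZS G) u) : u ≠ 0 := h.2.1

lemma isAtomIn_iff {u : Multiset G} :
    IsAtomIn (ZS G) u ↔ u.sum = 0 ∧ u ≠ 0 ∧ ∀ Z ≤ u, Z.sum = 0 → Z = 0 ∨ Z = u := by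
  constructor
  · rintro ⟨hS, hne, hmin⟩
    refine ⟨hS, hne, fun Z hZ hZ0 => ?_⟩
    have hu : u = Z + (u - Z) := (add_tsub_cancel_of_le hZ).symm
    have h2 : (u - Z).sum = 0 := by
      have h3 := congrArg Multiset.sum hu
      rw [Multiset.sum_add, hZ0, zero_add, hS] at h3
      exact h3.symm
    rcases hmin Z hZ0 (u - Z) h2 hu with h | h
    · exact Or.inl h
    · exact Or.inr (le_antisymm hZ (tsub_eq_zero_iff_le.mp h))
  · rintro ⟨h0, hne, hmin⟩
    refine ⟨h0, hne, fun v hv w hw heq => ?_⟩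
    have hvle : v ≤ u := heq ▸ self_le_add_right v w
    rcases hmin v hvle hv with h | h
    · exact Or.inl h
    · right
      rw [h] at heq
      exact left_eq_add.mp heq

lemma zs_atom_min {u : Multiset G} (h : IsAtomIn (ZS G) u) :
    ∀ Z ≤ u, Z.sum = 0 → Z = 0 ∨ Z = u := (isAtomIn_iff.mp h).2.2

lemma zs_atom_zero_mem {u : Multiset G} (h : IsAtomIn (ZS G) u) (h0 : (0:G) ∈ u) :
    u = {0} := by
  rcases zs_atom_min h {0} (Multiset.singleton_le.mpr h0) (by simp) with h' | h'
  · exact absurd h' (Multiset.singleton_ne_zero 0)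
  · exact h'.symm

lemma zs_atom_of_small {u : Multiset G} (h0 : u.sum = 0) (hne : u ≠ 0)
    (hcard : Multiset.card u ≤ 3) (hall : ∀ a ∈ u, a ≠ 0) : IsAtomIn (ZS G) u := by
  rw [isAtomIn_iff]
  refine ⟨h0, hne, fun Z hZ hZ0 => ?_⟩
  by_contra hcon
  push_neg at hcon
  obtain ⟨hZne, hZnu⟩ := hcon
  have key : ∀ v ≤ u, v.sum = 0 → Multiset.card v = 1 → False := by
    intro v hv hvs hv1
    obtain ⟨a, rfl⟩ := Multiset.card_eq_one.mp hv1
    have ha : a ∈ u := Multiset.mem_of_le hv (Multiset.mem_singleton_self a)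
    exact hall a ha (by simpa using hvs)
  have hc1 : 1 ≤ Multiset.card Z := Multiset.card_pos.mpr hZne
  have hcu : Multiset.card Z < Multiset.card u :=
    Multiset.card_lt_card (lt_of_le_of_ne hZ hZnu)
  have hWsum : (u - Z).sum = 0 := by
    have hu : Z + (u - Z) = u := add_tsub_cancel_of_le hZ
    have h3 := congrArg Multiset.sum hu
    rw [Multiset.sum_add, hZ0, zero_add, h0] at h3
    exact h3
  have hcard' : Multiset.card Z + Multiset.card (u - Z) = Multiset.card u := by
    have hu : Z + (u - Z) = u := add_tsub_cancel_of_le hZ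
    have := congrArg Multiset.card hu
    rwa [Multiset.card_add] at this
  rcases (by omega : Multiset.card Z = 1 ∨ Multiset.card (u - Z) = 1) with h1 | h1
  · exact key Z hZ hZ0 h1
  · exact key (u - Z) tsub_le_self hWsum h1

/-! ### atoms have bounded length -/

lemma zs_atom_card_le [Fintype G] {u : Multiset G} (h : IsAtomIn (ZS G) u) :
    Multiset.card u ≤ Fintype.card G := by
  by_contra hcon
  push_neg at hcon
  set l := u.toList with hl
  have hlen : l.length = Multiset.card u := Multiset.length_toList u
  have hcoe : (l : Multiset G) = u := Multiset.coe_toList u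
  set F : Fin l.length → G := fun i => (l.take (i.1+1)).sum with hF
  have main : ∀ i j : Fin l.length, i.1 < j.1 → F i = F j → False := by
    intro i j hlt heq
    set sl := (l.take (j.1+1)).drop (i.1+1) with hsl
    have htk : (l.take (j.1+1)).take (i.1+1) = l.take (i.1+1) := by
      rw [List.take_take]
      congr 1
      omega
    have hsplit : l.take (i.1+1) ++ sl = l.take (j.1+1) := by
      rw [hsl, ← htk, List.take_append_drop]
    have hsum : (l.take (i.1+1)).sum + sl.sum = (l.take (j.1+1)).sum := by
      rw [← List.sum_append, hsplit]
    have hsz : sl.sum = 0 := by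
      have h2 : F i + sl.sum = F j := hsum
      rw [heq] at h2
      exact add_eq_left.mp h2
    have hjlen : j.1 < l.length := j.2
    have hslen : sl.length = j.1 - i.1 := by
      rw [hsl, List.length_drop, List.length_take]
      omega
    have hZle : (sl : Multiset G) ≤ u := by
      rw [← hcoe]
      exact Multiset.coe_le.mpr
        (((List.drop_sublist _ _).trans (List.take_sublist _ _)).subperm)
    have hZs : (sl : Multiset G).sum = 0 := by rw [Multiset.sum_coe]; exact hsz
    rcases zs_atom_min h _ hZle hZs with h' | h'
    · have : sl.length = 0 := by
        have := congrArg Multiset.card h'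
        simpa [Multiset.coe_card] using this
      omega
    · have hcc := congrArg Multiset.card h'
      rw [Multiset.coe_card] at hcc
      omega
  have hcard : Fintype.card G < Fintype.card (Fin l.length) := by
    rw [Fintype.card_fin]
    omega
  obtain ⟨i, j, hij, hFij⟩ := Fintype.exists_ne_map_eq_of_card_lt F hcard
  rcases Nat.lt_or_ge i.1 j.1 with h1 | h1
  · exact main i j h1 hFij
  · rcases Nat.lt_or_ge j.1 i.1 with h2 | h2
    · exact main j i h2 hFij.symm
    · exact hij (Fin.ext (by omega))

lemma zs_davenport_bddAbove [Fintype G] :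
    BddAbove {n : ℕ | ∃ s : Multiset G, IsAtomIn (ZS G) s ∧ Multiset.card s = n} := by
  refine ⟨Fintype.card G, fun n hn => ?_⟩
  obtain ⟨s, hs, rfl⟩ := hn
  exact zs_atom_card_le hs

lemma zs_card_le_davenport [Fintype G] {u : Multiset G} (h : IsAtomIn (ZS G) u) :
    Multiset.card u ≤ davenport G :=
  le_csSup zs_davenport_bddAbove ⟨u, h, rfl⟩

/-! ### factorizations -/

lemma zs_exists_atom_le : ∀ (n : ℕ) (s : Multiset G), Multiset.card s ≤ n → s.sum = 0 →
    s ≠ 0 → ∃ u, u ≤ s ∧ IsAtomIn (ZS G) u := by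
  intro n
  induction n with
  | zero =>
    intro s hc hs hne
    exact absurd (Multiset.card_eq_zero.mp (le_antisymm hc zero_le)) hne
  | succ n ih =>
    intro s hc hs hne
    by_cases ha : IsAtomIn (ZS G) s
    · exact ⟨s, le_refl s, ha⟩
    · have hn : ¬(∀ Z ≤ s, Z.sum = 0 → Z = 0 ∨ Z = s) :=
        fun hmin => ha (isAtomIn_iff.mpr ⟨hs, hne, hmin⟩)
      push_neg at hn
      obtain ⟨Z, hZle, hZs, hZne, hZs'⟩ := hn
      have hlt : Multiset.card Z < Multiset.card s :=
        Multiset.card_lt_card (lt_of_le_of_ne hZle hZs')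
      obtain ⟨u, hu1, hu2⟩ := ih Z (by omega) hZs hZne
      exact ⟨u, le_trans hu1 hZle, hu2⟩

lemma zs_exists_factorization : ∀ (n : ℕ) (s : Multiset G), Multiset.card s ≤ n → s.sum = 0 →
    ∃ l : List (Multiset G), (∀ x ∈ l, IsAtomIn (ZS G) x) ∧ l.sum = s := by
  intro n
  induction n with
  | zero =>
    intro s hc hs
    have h0 : s = 0 := Multiset.card_eq_zero.mp (le_antisymm hc zero_le)
    exact ⟨[], by simp, by simp [h0]⟩
  | succ n ih =>
    intro s hc hs
    by_cases hne : s = 0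
    · exact ⟨[], by simp, by simp [hne]⟩
    · obtain ⟨u, hule, hu⟩ := zs_exists_atom_le (n+1) s hc hs hne
      have hrest : (s - u).sum = 0 := by
        have h1 : u + (s - u) = s := add_tsub_cancel_of_le hule
        have h2 := congrArg Multiset.sum h1
        rw [Multiset.sum_add, hu.zsum, zero_add, hs] at h2
        exact h2
      have hcd : Multiset.card (s - u) ≤ n := by
        have h1 : u + (s - u) = s := add_tsub_cancel_of_le hule
        have h2 := congrArg Multiset.card h1
        rw [Multiset.card_add] at h2
        have h3 : 1 ≤ Multiset.card u := Multiset.card_pos.mpr hu.nz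
        omega
      obtain ⟨l, hl1, hl2⟩ := ih (s - u) hcd hrest
      refine ⟨u :: l, ?_, ?_⟩
      · intro x hx
        rcases List.mem_cons.mp hx with h | h
        · subst h; exact hu
        · exact hl1 x h
      · rw [List.sum_cons, hl2, add_tsub_cancel_of_le hule]

lemma zs_mem_lengthsIn {a : Multiset G} {l : List (Multiset G)}
    (h1 : ∀ x ∈ l, IsAtomIn (ZS G) x) (h2 : l.sum = a) :
    l.length ∈ lengthsIn (ZS G) a := ⟨l, rfl, h1, h2⟩

lemma zs_length_zero {k : ℕ} (h : k ∈ lengthsIn (ZS G) (0 : Multiset G)) : k = 0 := by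
  obtain ⟨l, hlen, hat, hsum⟩ := h
  cases l with
  | nil => simpa using hlen.symm
  | cons w t =>
    exfalso
    have hw : w ≤ (w :: t).sum := zs_mem_le_list_sum (by simp)
    rw [hsum] at hw
    exact (hat w (by simp)).nz (Multiset.le_zero.mp hw)

lemma zs_length_atom {u : Multiset G} (hu : IsAtomIn (ZS G) u) {k : ℕ}
    (h : k ∈ lengthsIn (ZS G) u) : k = 1 := by
  obtain ⟨l, hlen, hat, hsum⟩ := h
  cases l with
  | nil => exact absurd (by simpa using hsum.symm) hu.nz
  | cons w t =>
    have hw := hat w (by simp)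
    have ht0 : (t.sum).sum = 0 := zs_list_sum_sum fun x hx => (hat x (by simp [hx])).zsum
    rcases hu.2.2 w hw.1 t.sum ht0 (by rw [← hsum, List.sum_cons]) with h' | h'
    · exact absurd h' hw.nz
    · have htnil : t = [] := by
        cases t with
        | nil => rfl
        | cons w2 t2 =>
          exfalso
          have hw2 : w2 ≤ (w2 :: t2).sum := zs_mem_le_list_sum (by simp)
          rw [h'] at hw2
          exact (hat w2 (by simp)).nz (Multiset.le_zero.mp hw2)
      subst htnil
      simpa using hlen.symm

end ZSAux

section ZSDescent

set_option linter.unusedSectionVars false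
set_option maxHeartbeats 1000000

variable {G : Type*} [AddCommGroup G]

/-- Contracting two elements of an atom into their sum yields an atom. -/
lemma zs_atom_contract {u' : Multiset G} {x y : G}
    (hu : IsAtomIn (ZS G) (x ::ₘ y ::ₘ u')) :
    IsAtomIn (ZS G) ((x + y) ::ₘ u') := by
  have hsum' : (x + y) + u'.sum = 0 := by
    have h := hu.zsum
    simp only [Multiset.sum_cons] at h
    rw [add_assoc]
    exact h
  rw [isAtomIn_iff]
  refine ⟨by rw [Multiset.sum_cons]; exact hsum', Multiset.cons_ne_zero, ?_⟩
  intro Z hZ hZ0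
  by_cases hc : Multiset.count (x + y) Z ≤ Multiset.count (x + y) u'
  · -- Z ≤ u'
    have hZu' : Z ≤ u' := by
      rw [Multiset.le_iff_count]
      intro a
      by_cases hax : a = x + y
      · subst hax; exact hc
      · have h1 := Multiset.count_le_of_le a hZ
        rwa [Multiset.count_cons_of_ne hax] at h1
    have hZu : Z ≤ x ::ₘ y ::ₘ u' :=
      le_trans hZu' (le_trans (Multiset.le_cons_self u' y)
        (Multiset.le_cons_self _ x))
    rcases zs_atom_min hu Z hZu hZ0 with h | h
    · exact Or.inl h
    · exfalso
      have h1 := Multiset.card_le_card hZu'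
      have h2 := congrArg Multiset.card h
      simp only [Multiset.card_cons] at h2
      omega
  · push_neg at hc
    have hcount : Multiset.count (x + y) Z = Multiset.count (x + y) u' + 1 := by
      have h1 := Multiset.count_le_of_le (x + y) hZ
      rw [Multiset.count_cons_self] at h1
      omega
    have hmem : (x + y) ∈ Z := by
      rw [← Multiset.count_pos]
      omega
    set Z' := Z.erase (x + y) with hZ'def
    have hZZ' : Z = (x + y) ::ₘ Z' := (Multiset.cons_erase hmem).symm
    have hZ'c : ∀ a, Multiset.count a Z' ≤ Multiset.count a u' := by
      intro a
      by_cases hax : a = x + y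
      · subst hax
        rw [hZ'def, Multiset.count_erase_self]
        omega
      · rw [hZ'def, Multiset.count_erase_of_ne hax]
        have h1 := Multiset.count_le_of_le a hZ
        rwa [Multiset.count_cons_of_ne hax] at h1
    set Zh := x ::ₘ y ::ₘ Z' with hZh
    have hZhle : Zh ≤ x ::ₘ y ::ₘ u' :=
      Multiset.cons_le_cons _ (Multiset.cons_le_cons _ (Multiset.le_iff_count.mpr hZ'c))
    have hZhsum : Zh.sum = 0 := by
      rw [hZh]
      simp only [Multiset.sum_cons]
      have h1 : Z.sum = 0 := hZ0
      rw [hZZ'] at h1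
      simp only [Multiset.sum_cons] at h1
      rw [← add_assoc]
      exact h1
    rcases zs_atom_min hu Zh hZhle hZhsum with h | h
    · exact absurd h Multiset.cons_ne_zero
    · right
      have h1 : Z' = u' :=
        (Multiset.cons_inj_right _).mp ((Multiset.cons_inj_right _).mp h)
      rw [hZZ', h1]

/-- A factorization of the expansion `x :: y :: S` of an atom `(x+y) :: S`
has at most two parts. -/
lemma zs_fact_le_two {W S : Multiset G} {x y : G}
    (hW : IsAtomIn (ZS G) W) (hWS : W = (x + y) ::ₘ S)
    {lw : List (Multiset G)} (hat : ∀ P ∈ lw, IsAtomIn (ZS G) P)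
    (hsum : lw.sum = x ::ₘ y ::ₘ S) : lw.length ≤ 2 := by
  by_contra hcon
  push_neg at hcon
  have hnle : ∀ P ∈ lw, ¬ P ≤ S := by
    intro P hP hPS
    have hPW : P ≤ W := by
      rw [hWS]
      exact le_trans hPS (Multiset.le_cons_self _ _)
    rcases zs_atom_min hW P hPW (hat P hP).zsum with h | h
    · exact (hat P hP).nz h
    · have h1 := Multiset.card_le_card hPS
      have h2 := congrArg Multiset.card h
      rw [hWS] at h2
      simp only [Multiset.card_cons] at h2
      omega
  have hexc : ∀ P ∈ lw, (Multiset.count x S + 1 ≤ Multiset.count x P) ∨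
      (Multiset.count y S + 1 ≤ Multiset.count y P) := by
    intro P hP
    by_contra hno
    push_neg at hno
    apply hnle P hP
    rw [Multiset.le_iff_count]
    intro a
    have hPle : P ≤ lw.sum := zs_mem_le_list_sum hP
    have h1 := Multiset.count_le_of_le a hPle
    rw [hsum] at h1
    by_cases hax : a = x
    · subst hax; omega
    · by_cases hay : a = y
      · subst hay; omega
      · rwa [Multiset.count_cons_of_ne hax, Multiset.count_cons_of_ne hay] at h1
  obtain ⟨P₁, l₁, rfl⟩ : ∃ P₁ l₁, lw = P₁ :: l₁ := by
    cases lw with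
    | nil => simp at hcon
    | cons a t => exact ⟨a, t, rfl⟩
  obtain ⟨P₂, l₂, rfl⟩ : ∃ P₂ l₂, l₁ = P₂ :: l₂ := by
    cases l₁ with
    | nil => simp at hcon
    | cons a t => exact ⟨a, t, rfl⟩
  obtain ⟨P₃, l₃, rfl⟩ : ∃ P₃ l₃, l₂ = P₃ :: l₃ := by
    cases l₂ with
    | nil => simp at hcon
    | cons a t => exact ⟨a, t, rfl⟩
  have he1 := hexc P₁ (by simp)
  have he2 := hexc P₂ (by simp)
  have he3 := hexc P₃ (by simp)
  by_cases hxy : x = y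
  · subst hxy
    have h1 := congrArg (Multiset.count x) hsum
    simp only [List.sum_cons, Multiset.count_add, Multiset.count_cons_self] at h1
    omega
  · have h1 := congrArg (Multiset.count x) hsum
    rw [List.sum_cons, List.sum_cons, List.sum_cons] at h1
    simp only [Multiset.count_add, Multiset.count_cons_self,
      Multiset.count_cons_of_ne hxy] at h1
    have h2 := congrArg (Multiset.count y) hsum
    rw [List.sum_cons, List.sum_cons, List.sum_cons] at h2
    simp only [Multiset.count_add, Multiset.count_cons_self,
      Multiset.count_cons_of_ne (fun h => hxy h.symm : y ≠ x)] at h2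
    rcases he1 with he1 | he1 <;> rcases he2 with he2 | he2 <;>
      rcases he3 with he3 | he3 <;> omega

/-- The expansion lemma: any length of `B = (x+y) :: C` is a length of
`A = x :: y :: C` or one less. -/
lemma zs_expand {A C : Multiset G} {x y : G} (hA : A = x ::ₘ y ::ₘ C)
    {t : ℕ} (ht : t ∈ lengthsIn (ZS G) ((x + y) ::ₘ C)) :
    t ∈ lengthsIn (ZS G) A ∨ t + 1 ∈ lengthsIn (ZS G) A := by
  obtain ⟨lb, hlen, hat, hsum⟩ := ht
  have hmem : (x + y) ∈ lb.sum := by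
    rw [hsum]
    exact Multiset.mem_cons_self _ _
  obtain ⟨W, hWlb, hWmem⟩ := zs_exists_mem_of_mem_list_sum hmem
  set S := W.erase (x + y) with hSdef
  have hWS : W = (x + y) ::ₘ S := (Multiset.cons_erase hWmem).symm
  have hperm : lb.Perm (W :: lb.erase W) := List.perm_cons_erase hWlb
  have hsum2 : W + (lb.erase W).sum = (x + y) ::ₘ C := by
    rw [← hsum, hperm.sum_eq, List.sum_cons]
  have hCeq : S + (lb.erase W).sum = C := by
    have h1 : (x + y) ::ₘ (S + (lb.erase W).sum) = (x + y) ::ₘ C := by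
      rw [← Multiset.cons_add, ← hWS, hsum2]
    exact (Multiset.cons_inj_right _).mp h1
  have hWhsum : (x ::ₘ y ::ₘ S).sum = 0 := by
    have h := (hat W hWlb).zsum
    rw [hWS] at h
    simp only [Multiset.sum_cons] at h ⊢
    rw [← add_assoc]
    exact h
  obtain ⟨lw, hlw1, hlw2⟩ :=
    zs_exists_factorization (Multiset.card (x ::ₘ y ::ₘ S)) _ le_rfl hWhsum
  have hlw_len : 1 ≤ lw.length := by
    rcases lw with _ | ⟨a, t'⟩
    · exact absurd hlw2.symm Multiset.cons_ne_zero
    · simp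
  have hle2 : lw.length ≤ 2 := zs_fact_le_two (hat W hWlb) hWS hlw1 hlw2
  have hfinal : (lw ++ lb.erase W).sum = A := by
    rw [List.sum_append, hlw2, hA, ← hCeq]
    simp only [Multiset.cons_add]
  have hatoms : ∀ P ∈ lw ++ lb.erase W, IsAtomIn (ZS G) P := by
    intro P hP
    rcases List.mem_append.mp hP with h | h
    · exact hlw1 P h
    · exact hat P (List.mem_of_mem_erase h)
  have hlenf : (lw ++ lb.erase W).length = lw.length + (t - 1) := by
    rw [List.length_append]
    have h1 := hperm.length_eq
    simp only [List.length_cons] at h1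
    omega
  have ht1 : 1 ≤ t := by
    rw [← hlen]
    rcases lb with _ | ⟨a, t'⟩
    · simp at hWlb
    · simp
  have hins := zs_mem_lengthsIn hatoms hfinal
  rcases (by omega : lw.length = 1 ∨ lw.length = 2) with h1 | h1
  · left
    have : (lw ++ lb.erase W).length = t := by omega
    rwa [this] at hins
  · right
    have : (lw ++ lb.erase W).length = t + 1 := by omega
    rwa [this] at hins

/-- Locating a pair `x, y` inside a factorization: either both in one part, or
in two different parts. -/
lemma zs_locate_pair {x y : G} {lv : List (Multiset G)} {A : Multiset G}
    (hsum : lv.sum = A) (hR : x ::ₘ {y} ≤ A) :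
    (∃ v ∈ lv, x ::ₘ {y} ≤ v) ∨
    (∃ v ∈ lv, ∃ w ∈ lv.erase v, x ∈ v ∧ y ∈ w) := by
  have hx : x ∈ A := Multiset.mem_of_le hR (Multiset.mem_cons_self _ _)
  obtain ⟨v, hv, hxv⟩ := zs_exists_mem_of_mem_list_sum (show x ∈ lv.sum by rw [hsum]; exact hx)
  by_cases hy : y ∈ v.erase x
  · left
    refine ⟨v, hv, ?_⟩
    calc x ::ₘ {y} ≤ x ::ₘ v.erase x :=
          Multiset.cons_le_cons x (Multiset.singleton_le.mpr hy)
    _ = v := Multiset.cons_erase hxv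
  · right
    have hcv : Multiset.count y v ≤ if y = x then 1 else 0 := by
      have h1 : Multiset.count y (v.erase x) = 0 := Multiset.count_eq_zero.mpr hy
      have h2 : v = x ::ₘ v.erase x := (Multiset.cons_erase hxv).symm
      rw [h2, Multiset.count_cons, h1]
      omega
    have hcA : (1 : ℕ) + (if y = x then 1 else 0) ≤ Multiset.count y A := by
      have h1 := Multiset.count_le_of_le y hR
      rw [Multiset.count_cons, Multiset.count_singleton, if_pos rfl] at h1
      omega
    have hrest : A = v + (lv.erase v).sum := by
      rw [← hsum, (List.perm_cons_erase hv).sum_eq, List.sum_cons]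
    have hyr : 0 < Multiset.count y (lv.erase v).sum := by
      have h3 : Multiset.count y A = Multiset.count y v + Multiset.count y (lv.erase v).sum := by
        rw [hrest, Multiset.count_add]
      omega
    obtain ⟨w, hw, hyw⟩ := zs_exists_mem_of_mem_list_sum (Multiset.count_pos.mp hyr)
    exact ⟨v, hv, w, hw, hxv, hyw⟩

/-- In any witness configuration, some atom of the short factorization contains two
elements with nonzero sum. -/
lemma zs_exists_pair {lu lv : List (Multiset G)} {A : Multiset G}
    (hu : ∀ u ∈ lu, IsAtomIn (ZS G) u) (hv : ∀ v ∈ lv, IsAtomIn (ZS G) v)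
    (hus : lu.sum = A) (hvs : lv.sum = A) (hlt : lu.length + 2 ≤ lv.length) :
    ∃ u ∈ lu, ∃ x y : G, x ::ₘ {y} ≤ u ∧ x + y ≠ 0 := by
  by_contra hcon
  push_neg at hcon
  have hueq : ∀ u ∈ lu, Multiset.card u + Multiset.count 0 u = 2 := by
    intro u hum
    have hat := hu u hum
    have hc1 : 1 ≤ Multiset.card u := Multiset.card_pos.mpr hat.nz
    rcases (by omega : Multiset.card u = 1 ∨ 2 ≤ Multiset.card u) with h1 | h1
    · obtain ⟨a, rfl⟩ := Multiset.card_eq_one.mp h1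
      have ha : a = 0 := by simpa using hat.zsum
      subst ha
      simp
    · -- extract two elements
      obtain ⟨a, u₁, rfl⟩ : ∃ a u₁, u = a ::ₘ u₁ := by
        obtain ⟨a, ha⟩ := Multiset.exists_mem_of_ne_zero
          (Multiset.card_pos.mp (show 0 < Multiset.card u by omega))
        obtain ⟨u₁, hu₁⟩ := Multiset.exists_cons_of_mem ha
        exact ⟨a, u₁, hu₁⟩
      obtain ⟨b, u₂, rfl⟩ : ∃ b u₂, u₁ = b ::ₘ u₂ := by
        have : 1 ≤ Multiset.card u₁ := by
          simp only [Multiset.card_cons] at h1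
          omega
        obtain ⟨b, hb⟩ := Multiset.exists_mem_of_ne_zero
          (Multiset.card_pos.mp (show 0 < Multiset.card u₁ by omega))
        obtain ⟨u₂, hu₂⟩ := Multiset.exists_cons_of_mem hb
        exact ⟨b, u₂, hu₂⟩
      have hRle : a ::ₘ {b} ≤ a ::ₘ b ::ₘ u₂ :=
        Multiset.cons_le_cons a (Multiset.cons_le_cons b zero_le)
      have hab : a + b = 0 := hcon _ hum a b hRle
      rcases (by omega : Multiset.card u₂ = 0 ∨ 1 ≤ Multiset.card u₂) with h2 | h2
      · -- card exactly 2
        have hu₂ : u₂ = 0 := Multiset.card_eq_zero.mp h2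
        subst hu₂
        have h0nm : (0 : G) ∉ (a ::ₘ b ::ₘ (0 : Multiset G)) := by
          intro h0
          have := zs_atom_zero_mem hat h0
          have hc := congrArg Multiset.card this
          simp at hc
        have hcz : Multiset.count 0 (a ::ₘ b ::ₘ (0 : Multiset G)) = 0 :=
          Multiset.count_eq_zero.mpr h0nm
        simp only [Multiset.card_cons, Multiset.card_zero] at *
        omega
      · -- card ≥ 3 : contradiction
        exfalso
        have hZ : (a ::ₘ {b} : Multiset G).sum = 0 := by
          simp [Multiset.sum_cons, hab]
        rcases zs_atom_min hat _ hRle hZ with h | h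
        · exact Multiset.cons_ne_zero h
        · have hc := congrArg Multiset.card h
          simp only [Multiset.card_cons, Multiset.card_singleton] at hc
          omega
  have hvge : ∀ v ∈ lv, 2 ≤ Multiset.card v + Multiset.count 0 v := by
    intro v hvm
    have hat := hv v hvm
    have hc1 : 1 ≤ Multiset.card v := Multiset.card_pos.mpr hat.nz
    rcases (by omega : Multiset.card v = 1 ∨ 2 ≤ Multiset.card v) with h1 | h1
    · obtain ⟨a, rfl⟩ := Multiset.card_eq_one.mp h1
      have ha : a = 0 := by simpa using hat.zsum
      subst ha
      simp
    · omega
  have hAu : Multiset.card A + Multiset.count 0 A = 2 * lu.length := by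
    rw [← hus, zs_card_list_sum, zs_count_list_sum, ← zs_list_sum_map_add]
    rw [zs_list_sum_map_eq lu _ (fun _ => 2) hueq, zs_list_sum_const]
  have hAv : 2 * lv.length ≤ Multiset.card A + Multiset.count 0 A := by
    rw [← hvs, zs_card_list_sum, zs_count_list_sum, ← zs_list_sum_map_add]
    calc 2 * lv.length = (lv.map fun _ => 2).sum := (zs_list_sum_const lv 2).symm
    _ ≤ (lv.map fun v => Multiset.card v + Multiset.count 0 v).sum :=
        zs_list_sum_map_le lv _ _ hvge
  omega

end ZSDescent

section ZSDescent2

set_option linter.unusedSectionVars false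
set_option maxHeartbeats 1000000

variable {G : Type*} [AddCommGroup G]

lemma zs_add_cons (s t : Multiset G) (a : G) : s + a ::ₘ t = a ::ₘ (s + t) := by
  rw [← Multiset.singleton_add, ← Multiset.singleton_add, add_left_comm]

/-- The descent step: from a witness of an adjacent gap `[k, K]` with `K ≥ k+2`,
produce a strictly smaller witness with adjacent gap `[k, K']`, `K' ≥ K - 1`. -/
lemma zs_descent {A : Multiset G} (hA : A.sum = 0) {k K : ℕ}
    (hk : k ∈ lengthsIn (ZS G) A) (hK : K ∈ lengthsIn (ZS G) A) (hkK : k + 2 ≤ K)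
    (hzone : ∀ m ∈ lengthsIn (ZS G) A, ¬(k < m ∧ m < K)) :
    ∃ (B : Multiset G) (K' : ℕ), B.sum = 0 ∧ Multiset.card B < Multiset.card A ∧
      k ∈ lengthsIn (ZS G) B ∧ K' ∈ lengthsIn (ZS G) B ∧ K ≤ K' + 1 ∧ k < K' ∧
      (∀ m ∈ lengthsIn (ZS G) B, ¬(k < m ∧ m < K')) := by
  obtain ⟨lu, hlu_len, hlu_at, hlu_sum⟩ := hk
  obtain ⟨lv, hlv_len, hlv_at, hlv_sum⟩ := hK
  obtain ⟨u, hum, x, y, hRu, hxy⟩ :=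
    zs_exists_pair hlu_at hlv_at hlu_sum hlv_sum (by omega)
  obtain ⟨u', hu'⟩ : ∃ u', u = x ::ₘ y ::ₘ u' := by
    obtain ⟨w, hw⟩ := Multiset.le_iff_exists_add.mp hRu
    refine ⟨w, ?_⟩
    rw [hw, Multiset.cons_add, Multiset.singleton_add]
  have hRA : x ::ₘ {y} ≤ A :=
    le_trans hRu (hlu_sum ▸ zs_mem_le_list_sum hum)
  obtain ⟨C, hC⟩ : ∃ C, A = x ::ₘ y ::ₘ C := by
    obtain ⟨w, hw⟩ := Multiset.le_iff_exists_add.mp hRA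
    refine ⟨w, ?_⟩
    rw [hw, Multiset.cons_add, Multiset.singleton_add]
  have hBsum : ((x + y) ::ₘ C).sum = 0 := by
    have h := hA
    rw [hC] at h
    simp only [Multiset.sum_cons] at h ⊢
    rw [add_assoc]
    exact h
  have hcard : Multiset.card ((x + y) ::ₘ C) < Multiset.card A := by
    rw [hC]
    simp only [Multiset.card_cons]
    omega
  have hkB : k ∈ lengthsIn (ZS G) ((x + y) ::ₘ C) := by
    have hat' : IsAtomIn (ZS G) ((x + y) ::ₘ u') := zs_atom_contract (hu' ▸ hlu_at u hum)
    have hr : u + (lu.erase u).sum = A := by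
      rw [← hlu_sum, (List.perm_cons_erase hum).sum_eq, List.sum_cons]
    have h2 : u' + (lu.erase u).sum = C := by
      have h1 : x ::ₘ y ::ₘ (u' + (lu.erase u).sum) = x ::ₘ y ::ₘ C := by
        rw [← hC, ← hr, hu']
        simp only [Multiset.cons_add]
      exact (Multiset.cons_inj_right _).mp ((Multiset.cons_inj_right _).mp h1)
    have hlen : (((x + y) ::ₘ u') :: lu.erase u).length = k := by
      have := (List.perm_cons_erase hum).length_eq
      simp only [List.length_cons] at this ⊢
      omega
    refine hlen ▸ zs_mem_lengthsIn ?_ ?_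
    · intro P hP
      rcases List.mem_cons.mp hP with h | h
      · subst h; exact hat'
      · exact hlu_at P (List.mem_of_mem_erase h)
    · rw [List.sum_cons, ← h2]
      simp only [Multiset.cons_add]
  have hbig : ∃ m, m ∈ lengthsIn (ZS G) ((x + y) ::ₘ C) ∧ k < m := by
    rcases zs_locate_pair hlv_sum hRA with ⟨v, hvm, hRv⟩ | ⟨v, hvm, w, hwm, hxv, hyw⟩
    · obtain ⟨v', hv'⟩ : ∃ v', v = x ::ₘ y ::ₘ v' := by
        obtain ⟨w', hw'⟩ := Multiset.le_iff_exists_add.mp hRv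
        refine ⟨w', ?_⟩
        rw [hw', Multiset.cons_add, Multiset.singleton_add]
      have hat' : IsAtomIn (ZS G) ((x + y) ::ₘ v') := zs_atom_contract (hv' ▸ hlv_at v hvm)
      have hr : v + (lv.erase v).sum = A := by
        rw [← hlv_sum, (List.perm_cons_erase hvm).sum_eq, List.sum_cons]
      have h2 : v' + (lv.erase v).sum = C := by
        have h1 : x ::ₘ y ::ₘ (v' + (lv.erase v).sum) = x ::ₘ y ::ₘ C := by
          rw [← hC, ← hr, hv']
          simp only [Multiset.cons_add]
        exact (Multiset.cons_inj_right _).mp ((Multiset.cons_inj_right _).mp h1)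
      have hlen : (((x + y) ::ₘ v') :: lv.erase v).length = K := by
        have := (List.perm_cons_erase hvm).length_eq
        simp only [List.length_cons] at this ⊢
        omega
      refine ⟨K, hlen ▸ zs_mem_lengthsIn ?_ ?_, by omega⟩
      · intro P hP
        rcases List.mem_cons.mp hP with h | h
        · subst h; exact hat'
        · exact hlv_at P (List.mem_of_mem_erase h)
      · rw [List.sum_cons, ← h2]
        simp only [Multiset.cons_add]
    · obtain ⟨v', hv'⟩ := Multiset.exists_cons_of_mem hxv
      obtain ⟨w', hw'⟩ := Multiset.exists_cons_of_mem hyw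
      have hwlv : w ∈ lv := List.mem_of_mem_erase hwm
      have hv'sum : x + v'.sum = 0 := by
        have h := (hlv_at v hvm).zsum
        rw [hv'] at h
        simpa [Multiset.sum_cons] using h
      have hw'sum : y + w'.sum = 0 := by
        have h := (hlv_at w hwlv).zsum
        rw [hw'] at h
        simpa [Multiset.sum_cons] using h
      have hMsum : ((x + y) ::ₘ (v' + w')).sum = 0 := by
        simp only [Multiset.sum_cons, Multiset.sum_add]
        calc x + y + (v'.sum + w'.sum) = (x + v'.sum) + (y + w'.sum) := by abel
        _ = 0 := by rw [hv'sum, hw'sum, add_zero]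
      obtain ⟨lm, hlm1, hlm2⟩ :=
        zs_exists_factorization (Multiset.card ((x + y) ::ₘ (v' + w'))) _ le_rfl hMsum
      have hlm_len : 1 ≤ lm.length := by
        rcases lm with _ | ⟨a, t'⟩
        · exact absurd hlm2.symm Multiset.cons_ne_zero
        · simp
      have hr : v + (w + ((lv.erase v).erase w).sum) = A := by
        rw [← hlv_sum, (List.perm_cons_erase hvm).sum_eq, List.sum_cons,
          (List.perm_cons_erase hwm).sum_eq, List.sum_cons]
      have h2 : v' + w' + ((lv.erase v).erase w).sum = C := by
        have h1 : x ::ₘ y ::ₘ (v' + w' + ((lv.erase v).erase w).sum) = x ::ₘ y ::ₘ C := by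
          rw [← hC, ← hr, hv', hw']
          simp only [Multiset.cons_add, zs_add_cons, add_assoc]
          rw [Multiset.cons_swap]
        exact (Multiset.cons_inj_right _).mp ((Multiset.cons_inj_right _).mp h1)
      have hlen : (lm ++ (lv.erase v).erase w).length = lm.length + (K - 2) := by
        rw [List.length_append]
        have e1 := (List.perm_cons_erase hvm).length_eq
        have e2 := (List.perm_cons_erase hwm).length_eq
        simp only [List.length_cons] at e1 e2
        omega
      refine ⟨lm.length + (K - 2), hlen ▸ zs_mem_lengthsIn ?_ ?_, by omega⟩
      · intro P hP
        rcases List.mem_append.mp hP with h | h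
        · exact hlm1 P h
        · exact hlv_at P (List.mem_of_mem_erase (List.mem_of_mem_erase h))
      · rw [List.sum_append, hlm2, ← h2]
        simp only [Multiset.cons_add]
  set K' := Nat.find hbig with hK'def
  obtain ⟨hK'mem, hK'gt⟩ := Nat.find_spec hbig
  have hK'min : ∀ m ∈ lengthsIn (ZS G) ((x + y) ::ₘ C), k < m → K' ≤ m :=
    fun m h1 h2 => Nat.find_min' hbig ⟨h1, h2⟩
  have hKK' : K ≤ K' + 1 := by
    rcases zs_expand hC hK'mem with h | h
    · by_contra hcon
      push_neg at hcon
      exact hzone K' h ⟨hK'gt, by omega⟩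
    · by_contra hcon
      push_neg at hcon
      exact hzone (K' + 1) h ⟨by omega, by omega⟩
  refine ⟨(x + y) ::ₘ C, K', hBsum, hcard, hkB, hK'mem, hKK', hK'gt, ?_⟩
  intro m hm hcon
  exact absurd (hK'min m hm hcon.1) (by omega)

/-- Any adjacent gap of size at least `d` yields `d ∈ Δ`. -/
lemma zs_reach {d : ℕ} (hd : 1 ≤ d) :
    ∀ (n : ℕ) (A : Multiset G), Multiset.card A ≤ n → A.sum = 0 →
    ∀ k K : ℕ, k ∈ lengthsIn (ZS G) A → K ∈ lengthsIn (ZS G) A → k + d ≤ K →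
    (∀ m ∈ lengthsIn (ZS G) A, ¬(k < m ∧ m < K)) → d ∈ DeltaIn (ZS G) := by
  intro n
  induction n with
  | zero =>
    intro A hc hA k K hk hK hdK hzone
    have hA0 : A = 0 := Multiset.card_eq_zero.mp (le_antisymm hc zero_le)
    subst hA0
    have h1 := zs_length_zero hk
    have h2 := zs_length_zero hK
    omega
  | succ n ih =>
    intro A hc hA k K hk hK hdK hzone
    by_cases hKd : K = k + d
    · subst hKd
      refine Set.mem_iUnion₂.mpr ⟨A, hA, ?_⟩
      refine ⟨by omega, k, hk, hK, ?_⟩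
      intro m hm h1 h2
      by_contra hcon
      push_neg at hcon
      exact hzone m hm ⟨lt_of_le_of_ne h1 (Ne.symm hcon.1), lt_of_le_of_ne h2 hcon.2⟩
    · obtain ⟨B, K', hB, hcardB, hkB, hK'B, hKK', hkK', hzoneB⟩ :=
        zs_descent hA hk hK (by omega) hzone
      exact ih B (by omega) hB k K' hkB hK'B (by omega) hzoneB

/-- Δ(G) is downward closed above 1. -/
lemma zs_interval {d e : ℕ} (he : e ∈ DeltaIn (ZS G)) (h1 : 1 ≤ d) (h2 : d ≤ e) :
    d ∈ DeltaIn (ZS G) := by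
  obtain ⟨a, ha, hdist⟩ := Set.mem_iUnion₂.mp he
  obtain ⟨hpos, k, hk, hke, hbet⟩ := hdist
  refine zs_reach h1 (Multiset.card a) a le_rfl ha k (k + e) hk hke (by omega) ?_
  intro m hm hcon
  rcases hbet m hm (le_of_lt hcon.1) (le_of_lt hcon.2) with h | h <;> omega

end ZSDescent2

section ZSBound

set_option linter.unusedSectionVars false
set_option maxHeartbeats 1000000

variable {G : Type*} [AddCommGroup G] [Fintype G]

lemma zs_count_bound {A u : Multiset G} (hu : u ≤ A) {lv : List (Multiset G)}
    (hsum : lv.sum = A) (hconf : ∀ v ∈ lv, ¬ (u + v ≤ A)) :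
    lv.length ≤ Multiset.card u := by
  have hconf' : ∀ v ∈ lv, ∃ g : G,
      Multiset.count g A + 1 ≤ Multiset.count g u + Multiset.count g v := by
    intro v hv
    have h := hconf v hv
    rw [Multiset.le_iff_count] at h
    push_neg at h
    obtain ⟨g, hg⟩ := h
    rw [Multiset.count_add] at hg
    exact ⟨g, hg⟩
  have hch : ∀ i : Fin lv.length, ∃ g : G,
      Multiset.count g A + 1 ≤ Multiset.count g u + Multiset.count g (lv.get i) :=
    fun i => hconf' (lv.get i) (lv.get_mem i)
  choose f hf using hch
  have htot : ∀ g : G,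
      (∑ i : Fin lv.length, Multiset.count g (lv.get i)) = Multiset.count g A := by
    intro g
    have h1 : lv.map (Multiset.count g) = List.ofFn (Multiset.count g ∘ lv.get) := by
      conv_lhs => rw [← List.ofFn_get lv]
      exact List.map_ofFn
    rw [← hsum, zs_count_list_sum, h1, List.sum_ofFn]
    rfl
  have hfiber : ∀ g : G,
      (Finset.univ.filter fun i : Fin lv.length => f i = g).card ≤ Multiset.count g u := by
    intro g
    set F := Finset.univ.filter fun i : Fin lv.length => f i = g with hF
    have hle : Multiset.count g u ≤ Multiset.count g A := Multiset.count_le_of_le g hu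
    have hsumF : (Multiset.count g A + 1 - Multiset.count g u) * F.card ≤
        Multiset.count g A := by
      have h1 : ∀ i ∈ F, Multiset.count g A + 1 - Multiset.count g u ≤
          Multiset.count g (lv.get i) := by
        intro i hi
        have hig : f i = g := (Finset.mem_filter.mp hi).2
        have h2 := hf i
        rw [hig] at h2
        omega
      calc (Multiset.count g A + 1 - Multiset.count g u) * F.card
          = ∑ _i ∈ F, (Multiset.count g A + 1 - Multiset.count g u) := by
            rw [Finset.sum_const, smul_eq_mul, mul_comm]
      _ ≤ ∑ i ∈ F, Multiset.count g (lv.get i) := Finset.sum_le_sum h1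
      _ ≤ ∑ i : Fin lv.length, Multiset.count g (lv.get i) :=
            Finset.sum_le_sum_of_subset (Finset.filter_subset _ _)
      _ = Multiset.count g A := htot g
    by_contra hcon
    push_neg at hcon
    set a := Multiset.count g A with ha
    set c := Multiset.count g u with hc
    have h3 : (a + 1 - c) * (c + 1) ≤ (a + 1 - c) * F.card :=
      Nat.mul_le_mul_left _ (by omega)
    have h6 : a - c ≤ (a - c) * (c + 1) := Nat.le_mul_of_pos_right _ (by omega)
    have h4 : (a - c) * (c + 1) + (c + 1) = (a + 1 - c) * (c + 1) := by
      have h5 : a + 1 - c = (a - c) + 1 := by omega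
      rw [h5]
      ring
    have hcontr : a + 1 ≤ a := by
      calc a + 1 = (a - c) + (c + 1) := by omega
      _ ≤ (a - c) * (c + 1) + (c + 1) := Nat.add_le_add_right h6 _
      _ = (a + 1 - c) * (c + 1) := h4
      _ ≤ (a + 1 - c) * F.card := h3
      _ ≤ a := hsumF
    omega
  calc lv.length = Fintype.card (Fin lv.length) := (Fintype.card_fin _).symm
  _ = (Finset.univ : Finset (Fin lv.length)).card := Finset.card_univ.symm
  _ = ∑ g : G, (Finset.univ.filter fun i => f i = g).card :=
      Finset.card_eq_sum_card_fiberwise (fun i _ => Finset.mem_univ (f i))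
  _ ≤ ∑ g : G, Multiset.count g u := Finset.sum_le_sum fun g _ => hfiber g
  _ = Multiset.card u := by
      rw [← Multiset.toFinset_sum_count_eq u]
      exact (Finset.sum_subset (Finset.subset_univ _)
        (fun g _ hg => Multiset.count_eq_zero.mpr
          fun hmem => hg (Multiset.mem_toFinset.mpr hmem))).symm

lemma zs_gap_bound :
    ∀ (k : ℕ) (A : Multiset G) (e : ℕ), 1 ≤ e → A.sum = 0 →
      k ∈ lengthsIn (ZS G) A → k + e ∈ lengthsIn (ZS G) A →
      (∀ m ∈ lengthsIn (ZS G) A, ¬(k < m ∧ m < k + e)) → e + 2 ≤ davenport G := by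
  intro k
  induction k using Nat.strong_induction_on with
  | _ k IH =>
    intro A e he hA hk hK hzone
    obtain ⟨lu, hlu_len, hlu_at, hlu_sum⟩ := hk
    obtain ⟨lv, hlv_len, hlv_at, hlv_sum⟩ := hK
    rcases Nat.lt_or_ge k 2 with hk2 | hk2
    · exfalso
      rcases (by omega : k = 0 ∨ k = 1) with h0 | h1
      · subst h0
        have hlu0 : lu = [] := List.length_eq_zero_iff.mp hlu_len
        have hA0 : A = 0 := by rw [← hlu_sum, hlu0]; rfl
        have hz := zs_length_zero (G := G)
          ⟨lv, hlv_len, hlv_at, by rw [hlv_sum, hA0]⟩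
        omega
      · subst h1
        obtain ⟨u, hu⟩ := List.length_eq_one_iff.mp hlu_len
        have huA : u = A := by
          rw [← hlu_sum, hu]
          simp
        have hat := hlu_at u (by rw [hu]; simp)
        have hz := zs_length_atom hat ⟨lv, hlv_len, hlv_at, by rw [hlv_sum, ← huA]⟩
        omega
    · by_cases halpha : ∃ ui ∈ lu, ∃ vj ∈ lv, ui + vj ≤ A
      · obtain ⟨ui, hui, vj, hvj, hle⟩ := halpha
        obtain ⟨C, hCdef⟩ := Multiset.le_iff_exists_add.mp hle
        have hCsum : C.sum = 0 := by
          have h := hA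
          rw [hCdef, Multiset.sum_add, Multiset.sum_add,
            (hlu_at ui hui).zsum, (hlv_at vj hvj).zsum] at h
          simpa using h
        obtain ⟨lC, hlC_at, hlC_sum⟩ :=
          zs_exists_factorization (Multiset.card C) C le_rfl hCsum
        have hA1v : vj + (ui + C) = A := by rw [hCdef, add_left_comm, add_assoc]
        have hA1sum : (ui + C).sum = 0 := by
          rw [Multiset.sum_add, (hlu_at ui hui).zsum, zero_add, hCsum]
        have hmem1 : (k + e) - 1 ∈ lengthsIn (ZS G) (ui + C) := by
          have hsum' : (lv.erase vj).sum = ui + C := by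
            have h1 : vj + (lv.erase vj).sum = A := by
              rw [← hlv_sum, (List.perm_cons_erase hvj).sum_eq, List.sum_cons]
            exact add_left_cancel (h1.trans hA1v.symm)
          have hlen' : (lv.erase vj).length = (k + e) - 1 := by
            have := (List.perm_cons_erase hvj).length_eq
            simp only [List.length_cons] at this
            omega
          exact hlen' ▸
            zs_mem_lengthsIn (fun P hP => hlv_at P (List.mem_of_mem_erase hP)) hsum'
        have hmem2 : 1 + lC.length ∈ lengthsIn (ZS G) (ui + C) := by
          have hl : (ui :: lC).length = 1 + lC.length := by simp [add_comm]
          refine hl ▸ zs_mem_lengthsIn ?_ ?_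
          · intro P hP
            rcases List.mem_cons.mp hP with h | h
            · rw [h]; exact hlu_at ui hui
            · exact hlC_at P h
          · rw [List.sum_cons, hlC_sum]
        have hzone1 : ∀ m ∈ lengthsIn (ZS G) (ui + C), ¬(k - 1 < m ∧ m < (k + e) - 1) := by
          intro m hm hcon
          obtain ⟨l, hl1, hl2, hl3⟩ := hm
          have hmem' : m + 1 ∈ lengthsIn (ZS G) A := by
            have hl : (vj :: l).length = m + 1 := by simp [hl1]
            refine hl ▸ zs_mem_lengthsIn ?_ ?_
            · intro P hP
              rcases List.mem_cons.mp hP with h | h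
              · rw [h]; exact hlv_at vj hvj
              · exact hl2 P h
            · rw [List.sum_cons, hl3, hA1v]
          exact hzone (m + 1) hmem' ⟨by omega, by omega⟩
        rcases Nat.lt_or_ge (1 + lC.length) ((k + e) - 1) with hcase | hcase
        · have hPmem : 1 + lC.length ≤ (k + e) - 2 := by omega
          set t := Nat.findGreatest (fun m => m ∈ lengthsIn (ZS G) (ui + C)) ((k + e) - 2)
            with ht
          have ht_mem : t ∈ lengthsIn (ZS G) (ui + C) :=
            Nat.findGreatest_spec hPmem hmem2
          have ht_ge : 1 + lC.length ≤ t := Nat.le_findGreatest hPmem hmem2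
          have ht_le : t ≤ (k + e) - 2 := Nat.findGreatest_le _
          have ht_k : t ≤ k - 1 := by
            by_contra hcon
            push_neg at hcon
            exact hzone1 t ht_mem ⟨by omega, by omega⟩
          have hIH : ((k + e) - 1 - t) + 2 ≤ davenport G := by
            refine IH t (by omega) (ui + C) ((k + e) - 1 - t) (by omega) hA1sum ht_mem ?_ ?_
            · have hteq : t + ((k + e) - 1 - t) = (k + e) - 1 := by omega
              rw [hteq]
              exact hmem1
            · intro m hm hcon
              obtain ⟨hc1, hc2⟩ := hcon
              have h9 : m ≤ t := by
                rw [ht]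
                exact Nat.le_findGreatest (show m ≤ (k + e) - 2 by omega) hm
              omega
          omega
        · have hA2u : ui + (vj + C) = A := by rw [hCdef, ← add_assoc]
          have hA2sum : (vj + C).sum = 0 := by
            rw [Multiset.sum_add, (hlv_at vj hvj).zsum, zero_add, hCsum]
          have hmem1' : k - 1 ∈ lengthsIn (ZS G) (vj + C) := by
            have hsum' : (lu.erase ui).sum = vj + C := by
              have h1 : ui + (lu.erase ui).sum = A := by
                rw [← hlu_sum, (List.perm_cons_erase hui).sum_eq, List.sum_cons]
              exact add_left_cancel (h1.trans hA2u.symm)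
            have hlen' : (lu.erase ui).length = k - 1 := by
              have := (List.perm_cons_erase hui).length_eq
              simp only [List.length_cons] at this
              omega
            exact hlen' ▸
              zs_mem_lengthsIn (fun P hP => hlu_at P (List.mem_of_mem_erase hP)) hsum'
          have hmem2' : 1 + lC.length ∈ lengthsIn (ZS G) (vj + C) := by
            have hl : (vj :: lC).length = 1 + lC.length := by simp [add_comm]
            refine hl ▸ zs_mem_lengthsIn ?_ ?_
            · intro P hP
              rcases List.mem_cons.mp hP with h | h
              · rw [h]; exact hlv_at vj hvj
              · exact hlC_at P h
            · rw [List.sum_cons, hlC_sum]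
          have hzone2 : ∀ m ∈ lengthsIn (ZS G) (vj + C), ¬(k - 1 < m ∧ m < (k + e) - 1) := by
            intro m hm hcon
            obtain ⟨l, hl1, hl2, hl3⟩ := hm
            have hmem' : m + 1 ∈ lengthsIn (ZS G) A := by
              have hl : (ui :: l).length = m + 1 := by simp [hl1]
              refine hl ▸ zs_mem_lengthsIn ?_ ?_
              · intro P hP
                rcases List.mem_cons.mp hP with h | h
                · rw [h]; exact hlu_at ui hui
                · exact hl2 P h
              · rw [List.sum_cons, hl3, hA2u]
            exact hzone (m + 1) hmem' ⟨by omega, by omega⟩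
          have hex : ∃ m, m ∈ lengthsIn (ZS G) (vj + C) ∧ (k + e) - 1 ≤ m :=
            ⟨1 + lC.length, hmem2', by omega⟩
          obtain ⟨hK₂mem, hK₂ge⟩ := Nat.find_spec hex
          have hK₂min : ∀ m ∈ lengthsIn (ZS G) (vj + C), (k + e) - 1 ≤ m →
              Nat.find hex ≤ m :=
            fun m h1 h2 => Nat.find_min' hex ⟨h1, h2⟩
          have hIH : (Nat.find hex - (k - 1)) + 2 ≤ davenport G := by
            refine IH (k - 1) (by omega) (vj + C) (Nat.find hex - (k - 1)) (by omega)
              hA2sum hmem1' ?_ ?_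
            · have hteq : (k - 1) + (Nat.find hex - (k - 1)) = Nat.find hex := by omega
              rw [hteq]
              exact hK₂mem
            · intro m hm hcon
              obtain ⟨hc1, hc2⟩ := hcon
              rcases Nat.lt_or_ge m ((k + e) - 1) with h3 | h3
              · exact hzone2 m hm ⟨hc1, h3⟩
              · have := hK₂min m hm h3
                omega
          omega
      · push_neg at halpha
        have hlu_ne : lu ≠ [] := by
          intro h
          rw [h] at hlu_len
          simp at hlu_len
          omega
        obtain ⟨u₀, lu', hlu'⟩ := List.exists_cons_of_ne_nil hlu_ne
        have hu₀ : u₀ ∈ lu := by rw [hlu']; simp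
        have hu₀le : u₀ ≤ A := hlu_sum ▸ zs_mem_le_list_sum hu₀
        have hbnd := zs_count_bound hu₀le hlv_sum (fun v hv => halpha u₀ hu₀ v hv)
        have hdav := zs_card_le_davenport (hlu_at u₀ hu₀)
        omega

end ZSBound

section ZSMain

set_option linter.unusedSectionVars false
set_option maxHeartbeats 1000000

variable {G : Type*} [AddCommGroup G]

lemma zs_one_mem [Fintype G] (hG : 3 ≤ Fintype.card G) : 1 ∈ DeltaIn (ZS G) := by
  by_cases h2 : ∀ g : G, g + g = 0
  · have hnt : Nontrivial G := Fintype.one_lt_card_iff_nontrivial.mp (by omega)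
    obtain ⟨e, he⟩ := exists_ne (0 : G)
    obtain ⟨f, hf0, hfe⟩ : ∃ f : G, f ≠ 0 ∧ f ≠ e := by
      have hsub : ({0, e} : Finset G).card ≤ 2 := by
        apply le_trans (Finset.card_insert_le _ _)
        simp
      have hpos : 0 < (Finset.univ \ ({0, e} : Finset G)).card := by
        have h1 : (Finset.univ \ ({0, e} : Finset G)).card =
            Fintype.card G - ({0, e} : Finset G).card := by
          rw [Finset.card_sdiff_of_subset (Finset.subset_univ _), Finset.card_univ]
        omega
      obtain ⟨f, hf⟩ := Finset.card_pos.mp hpos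
      rw [Finset.mem_sdiff] at hf
      have hf2 := hf.2
      simp only [Finset.mem_insert, Finset.mem_singleton] at hf2
      push_neg at hf2
      exact ⟨f, hf2.1, hf2.2⟩
    have hef : e + f ≠ 0 := by
      intro h
      apply hfe
      have h3 : f = -e := by
        rw [neg_eq_of_add_eq_zero_right h]
      rw [h3, neg_eq_of_add_eq_zero_right (h2 e)]
    have hT : IsAtomIn (ZS G) (e ::ₘ f ::ₘ {e + f}) := by
      apply zs_atom_of_small
      · simp only [Multiset.sum_cons, Multiset.sum_singleton]
        calc e + (f + (e + f)) = (e + f) + (e + f) := by abel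
        _ = 0 := h2 _
      · exact Multiset.cons_ne_zero
      · simp
      · intro a ha
        simp only [Multiset.mem_cons, Multiset.mem_singleton] at ha
        rcases ha with h | h | h <;> subst h <;> assumption
    have hPe : IsAtomIn (ZS G) (e ::ₘ {e}) := by
      apply zs_atom_of_small
      · simp only [Multiset.sum_cons, Multiset.sum_singleton]
        exact h2 e
      · exact Multiset.cons_ne_zero
      · simp
      · intro a ha
        simp only [Multiset.mem_cons, Multiset.mem_singleton] at ha
        rcases ha with h | h <;> subst h <;> assumption
    have hPf : IsAtomIn (ZS G) (f ::ₘ {f}) := by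
      apply zs_atom_of_small
      · simp only [Multiset.sum_cons, Multiset.sum_singleton]
        exact h2 f
      · exact Multiset.cons_ne_zero
      · simp
      · intro a ha
        simp only [Multiset.mem_cons, Multiset.mem_singleton] at ha
        rcases ha with h | h <;> subst h <;> assumption
    have hPef : IsAtomIn (ZS G) ((e + f) ::ₘ {e + f}) := by
      apply zs_atom_of_small
      · simp only [Multiset.sum_cons, Multiset.sum_singleton]
        exact h2 (e + f)
      · exact Multiset.cons_ne_zero
      · simp
      · intro a ha
        simp only [Multiset.mem_cons, Multiset.mem_singleton] at ha
        rcases ha with h | h <;> subst h <;> assumption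
    have hBeq : (e ::ₘ {e}) + ((f ::ₘ {f}) + ((e + f) ::ₘ {e + f})) =
        (e ::ₘ f ::ₘ {e + f}) + (e ::ₘ f ::ₘ {e + f}) := by
      refine Multiset.ext.mpr fun a => ?_
      simp only [Multiset.count_add, Multiset.count_cons, Multiset.count_singleton]
      ring
    refine Set.mem_iUnion₂.mpr
      ⟨(e ::ₘ f ::ₘ {e + f}) + (e ::ₘ f ::ₘ {e + f}), ?_, ?_⟩
    · show Multiset.sum _ = 0
      rw [Multiset.sum_add, hT.zsum, add_zero]
    · refine ⟨by omega, 2, ?_, ?_, ?_⟩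
      · have hl : ([e ::ₘ f ::ₘ {e + f}, e ::ₘ f ::ₘ {e + f}] :
            List (Multiset G)).length = 2 := rfl
        refine hl ▸ zs_mem_lengthsIn ?_ ?_
        · intro x hx
          simp only [List.mem_cons, List.not_mem_nil, or_false] at hx
          rcases hx with h | h <;> rw [h] <;> exact hT
        · simp only [List.sum_cons, List.sum_nil, add_zero]
      · have hl : ([e ::ₘ {e}, f ::ₘ {f}, (e + f) ::ₘ {e + f}] :
            List (Multiset G)).length = 2 + 1 := rfl
        refine hl ▸ zs_mem_lengthsIn ?_ ?_
        · intro x hx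
          simp only [List.mem_cons, List.not_mem_nil, or_false] at hx
          rcases hx with h | h | h <;> rw [h]
          · exact hPe
          · exact hPf
          · exact hPef
        · simp only [List.sum_cons, List.sum_nil, add_zero]
          exact hBeq
      · intro m hm hh1 hh2
        omega
  · push_neg at h2
    obtain ⟨g, hg⟩ := h2
    have hg0 : g ≠ 0 := by
      intro h
      subst h
      simp at hg
    have hng : -g ≠ 0 := by simpa using hg0
    have hn2g : -(g + g) ≠ 0 := by
      intro h
      exact hg (neg_eq_zero.mp h)
    have hA1 : IsAtomIn (ZS G) ((-(g + g)) ::ₘ g ::ₘ {g}) := by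
      apply zs_atom_of_small
      · simp only [Multiset.sum_cons, Multiset.sum_singleton]
        abel
      · exact Multiset.cons_ne_zero
      · simp
      · intro a ha
        simp only [Multiset.mem_cons, Multiset.mem_singleton] at ha
        rcases ha with h | h | h <;> subst h <;> assumption
    have hA1' : IsAtomIn (ZS G) ((g + g) ::ₘ (-g) ::ₘ {-g}) := by
      apply zs_atom_of_small
      · simp only [Multiset.sum_cons, Multiset.sum_singleton]
        abel
      · exact Multiset.cons_ne_zero
      · simp
      · intro a ha
        simp only [Multiset.mem_cons, Multiset.mem_singleton] at ha
        rcases ha with h | h | h <;> subst h <;> assumption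
    have hP1 : IsAtomIn (ZS G) ((g + g) ::ₘ {-(g + g)}) := by
      apply zs_atom_of_small
      · simp only [Multiset.sum_cons, Multiset.sum_singleton]
        abel
      · exact Multiset.cons_ne_zero
      · simp
      · intro a ha
        simp only [Multiset.mem_cons, Multiset.mem_singleton] at ha
        rcases ha with h | h <;> subst h <;> assumption
    have hP2 : IsAtomIn (ZS G) (g ::ₘ {-g}) := by
      apply zs_atom_of_small
      · simp only [Multiset.sum_cons, Multiset.sum_singleton]
        abel
      · exact Multiset.cons_ne_zero
      · simp
      · intro a ha
        simp only [Multiset.mem_cons, Multiset.mem_singleton] at ha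
        rcases ha with h | h <;> subst h <;> assumption
    have hBeq : ((g + g) ::ₘ {-(g + g)}) + ((g ::ₘ {-g}) + (g ::ₘ {-g})) =
        ((-(g + g)) ::ₘ g ::ₘ {g}) + ((g + g) ::ₘ (-g) ::ₘ {-g}) := by
      refine Multiset.ext.mpr fun a => ?_
      simp only [Multiset.count_add, Multiset.count_cons, Multiset.count_singleton]
      ring
    refine Set.mem_iUnion₂.mpr
      ⟨((-(g + g)) ::ₘ g ::ₘ {g}) + ((g + g) ::ₘ (-g) ::ₘ {-g}), ?_, ?_⟩
    · show Multiset.sum _ = 0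
      rw [Multiset.sum_add, hA1.zsum, hA1'.zsum, add_zero]
    · refine ⟨by omega, 2, ?_, ?_, ?_⟩
      · have hl : ([(-(g + g)) ::ₘ g ::ₘ {g}, (g + g) ::ₘ (-g) ::ₘ {-g}] :
            List (Multiset G)).length = 2 := rfl
        refine hl ▸ zs_mem_lengthsIn ?_ ?_
        · intro x hx
          simp only [List.mem_cons, List.not_mem_nil, or_false] at hx
          rcases hx with h | h <;> rw [h]
          · exact hA1
          · exact hA1'
        · simp only [List.sum_cons, List.sum_nil, add_zero]
      · have hl : ([(g + g) ::ₘ {-(g + g)}, g ::ₘ {-g}, g ::ₘ {-g}] :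
            List (Multiset G)).length = 2 + 1 := rfl
        refine hl ▸ zs_mem_lengthsIn ?_ ?_
        · intro x hx
          simp only [List.mem_cons, List.not_mem_nil, or_false] at hx
          rcases hx with h | h | h <;> rw [h]
          · exact hP1
          · exact hP2
          · exact hP2
        · simp only [List.sum_cons, List.sum_nil, add_zero]
          exact hBeq
      · intro m hm hh1 hh2
        omega

end ZSMain

theorem stmt18 {G : Type*} [AddCommGroup G] [Fintype G] (hG : 3 ≤ Fintype.card G) :
    1 ∈ DeltaIn (ZS G) ∧
    (∀ d ∈ DeltaIn (ZS G), d + 2 ≤ davenport G) ∧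
    ∀ d₁ d₂ d : ℕ, d₁ ∈ DeltaIn (ZS G) → d₂ ∈ DeltaIn (ZS G) → d₁ ≤ d → d ≤ d₂ →
      d ∈ DeltaIn (ZS G) := by
  refine ⟨zs_one_mem hG, ?_, ?_⟩
  · intro d hd
    obtain ⟨a, ha, hdist⟩ := Set.mem_iUnion₂.mp hd
    obtain ⟨hpos, k, hk, hkd, hbet⟩ := hdist
    refine zs_gap_bound k a d (by omega) ha hk hkd ?_
    intro m hm hcon
    rcases hbet m hm (le_of_lt hcon.1) (le_of_lt hcon.2) with h | h <;> omega
  · intro d₁ d₂ d h₁ h₂ hl hr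
    obtain ⟨a, ha, hdist⟩ := Set.mem_iUnion₂.mp h₁
    obtain ⟨hpos, _⟩ := hdist
    exact zs_interval h₂ (by omega) hr
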